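/- The events {all edges incident to vertex t are unoriented}, indexed by even vertices t ∈ V_even of the hypercube, are mutually independent. -/

import Mathlib

open MeasureTheory ProbabilityTheory

namespace IndepAllTiesAux

variable {N : ℕ}

/-- flip coordinate `i` of `t`. -/
def updF (t : Fin N → Bool) (i : Fin N) : Fin N → Bool := Function.update t i (!t i)

/-- the index set of random variables that event `E t` depends on. -/
noncomputable def SS (t : Fin N → Bool) : Finset (Fin N × (Fin N → Bool)) :=
  (Finset.univ.image fun i => (i, t)) ∪ (Finset.univ.image fun i => (i, updF t i))

lemma mem_SS_left (t : Fin N → Bool) (i : Fin N) : (i, t) ∈ SS t := by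
  simp [SS]

lemma mem_SS_right (t : Fin N → Bool) (i : Fin N) : (i, updF t i) ∈ SS t := by
  simp [SS]

/-- The "all ties" set in the finite product space. -/
def goodSet (A : Finset (Fin N × (Fin N → Bool))) (t : Fin N → Bool) :
    Set ({p // p ∈ A} → ℝ) :=
  {g | ∀ (i : Fin N) (h1 : (i, t) ∈ A) (h2 : (i, updF t i) ∈ A),
    g ⟨(i, t), h1⟩ = g ⟨(i, updF t i), h2⟩}

lemma measurableSet_goodSet (A : Finset (Fin N × (Fin N → Bool))) (t : Fin N → Bool) :
    MeasurableSet (goodSet A t) := by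
  have : goodSet A t = ⋂ (i : Fin N), ⋂ (h1 : (i, t) ∈ A), ⋂ (h2 : (i, updF t i) ∈ A),
      {g : {p // p ∈ A} → ℝ | g ⟨(i, t), h1⟩ = g ⟨(i, updF t i), h2⟩} := by
    ext g; simp [goodSet]
  rw [this]
  exact MeasurableSet.iInter fun i => MeasurableSet.iInter fun h1 =>
    MeasurableSet.iInter fun h2 =>
      measurableSet_eq_fun (measurable_pi_apply _) (measurable_pi_apply _)

/-- parity of the number of `true` coordinates. -/
lemma not_even_updF (t : Fin N → Bool) (i : Fin N)
    (h : Even (Finset.univ.filter (fun j => t j = true)).card) :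
    ¬ Even (Finset.univ.filter (fun j => updF t i j = true)).card := by
  classical
  have hfil : Finset.univ.filter (fun j => updF t i j = true)
      = if t i = true then (Finset.univ.filter fun j => t j = true).erase i
        else insert i (Finset.univ.filter fun j => t j = true) := by
    split_ifs with h'
    · ext j
      by_cases hj : j = i <;> simp [updF, Function.update_apply, hj, h']
    · ext j
      by_cases hj : j = i <;>
        simp [updF, Function.update_apply, hj, h']
  rw [hfil]
  split_ifs with h'
  · have hi : i ∈ Finset.univ.filter fun j => t j = true := by simp [h']
    rw [Finset.card_erase_of_mem hi]
    have hpos : 1 ≤ (Finset.univ.filter fun j => t j = true).card :=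
      Finset.card_pos.mpr ⟨i, hi⟩
    have := Nat.Even.sub_odd hpos h odd_one
    exact (Nat.not_even_iff_odd).mpr this
  · have hi : i ∉ Finset.univ.filter fun j => t j = true := by simp [h']
    rw [Finset.card_insert_of_notMem hi]
    exact (Nat.not_even_iff_odd).mpr (Even.add_one h)

lemma SS_disjoint {t t' : Fin N → Bool}
    (ht : Even (Finset.univ.filter (fun j => t j = true)).card)
    (ht' : Even (Finset.univ.filter (fun j => t' j = true)).card)
    (hne : t ≠ t') : Disjoint (SS t) (SS t') := by
  classical
  rw [Finset.disjoint_left]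
  rintro p hp hp'
  simp only [SS, Finset.mem_union, Finset.mem_image, Finset.mem_univ, true_and] at hp hp'
  rcases hp with ⟨i, hi⟩ | ⟨i, hi⟩ <;> rcases hp' with ⟨j, hj⟩ | ⟨j, hj⟩
  · -- (i, t) = (j, t')
    apply hne
    have := hi.trans hj.symm
    exact congrArg Prod.snd this
  · -- (i, t) = (j, updF t' j)
    have := hi.trans hj.symm
    have h2 : t = updF t' j := congrArg Prod.snd this
    exact not_even_updF t' j ht' (h2 ▸ ht)
  · have := hi.trans hj.symm
    have h2 : updF t i = t' := congrArg Prod.snd this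
    exact not_even_updF t i ht (h2 ▸ ht')
  · have := hi.trans hj.symm
    have hij : i = j := congrArg Prod.fst this
    subst hij
    have h2 : updF t i = updF t' i := congrArg Prod.snd this
    apply hne
    funext k
    by_cases hk : k = i
    · subst hk
      have := congrFun h2 k
      simp only [updF, Function.update_self] at this
      exact Bool.not_inj this
    · have := congrFun h2 k
      simpa [updF, Function.update_of_ne hk] using this

end IndepAllTiesAux

open IndepAllTiesAux

/-- The events "all edges incident to vertex `t` are unoriented (ties)", indexed by the even
vertices of the hypercube, are mutually independent: for any finite set `I` of even vertices,
the probability of the intersection is the product of the probabilities. -/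
theorem indep_allTies_even_vertices (Ω : Type*) [MeasurableSpace Ω] (μ : Measure Ω)
    [IsProbabilityMeasure μ] (N : ℕ)
    (Z : (Fin N × (Fin N → Bool)) → Ω → ℝ)
    (hmeas : ∀ p, Measurable (Z p))
    (hindep : iIndepFun Z μ)
    (hident : ∀ p q, IdentDistrib (Z p) (Z q) μ μ)
    (E : (Fin N → Bool) → Set Ω)
    (hE : ∀ t, E t = {ω | ∀ i : Fin N, Z (i, t) ω = Z (i, Function.update t i (!t i)) ω})
    (I : Finset (Fin N → Bool))
    (hIeven : ∀ t ∈ I, Even (Finset.univ.filter (fun i => t i = true)).card) :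
    μ (⋂ t ∈ I, E t) = ∏ t ∈ I, μ (E t) := by
  classical
  -- key: E t is the preimage of goodSet under restriction of Z to any superset of SS t
  have hpre : ∀ (A : Finset (Fin N × (Fin N → Bool))) (t : Fin N → Bool),
      (∀ i, (i, t) ∈ A) → (∀ i, (i, updF t i) ∈ A) →
      (fun ω (p : {p // p ∈ A}) => Z p ω) ⁻¹' goodSet A t = E t := by
    intro A t h1 h2
    ext ω
    simp only [Set.mem_preimage, goodSet, Set.mem_setOf_eq, hE t]
    constructor
    · intro h i
      exact h i (h1 i) (h2 i)
    · intro h i hi1 hi2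
      exact h i
  induction I using Finset.induction with
  | empty => simp
  | @insert t0 I ht0 ih =>
    have hIeven' : ∀ t ∈ I, Even (Finset.univ.filter (fun i => t i = true)).card :=
      fun t ht => hIeven t (Finset.mem_insert_of_mem ht)
    have ht0even := hIeven t0 (Finset.mem_insert_self t0 I)
    set T : Finset (Fin N × (Fin N → Bool)) := I.biUnion SS with hT
    have hdisj : Disjoint (SS t0) T := by
      rw [Finset.disjoint_biUnion_right]
      intro t ht
      exact SS_disjoint ht0even (hIeven' t ht) (fun h => ht0 (h ▸ ht))
    have hIndep := hindep.indepFun_finset (SS t0) T hdisj hmeas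
    have h1 : E t0 = (fun ω (p : {p // p ∈ SS t0}) => Z p ω) ⁻¹' goodSet (SS t0) t0 :=
      (hpre (SS t0) t0 (mem_SS_left t0) (mem_SS_right t0)).symm
    have h2 : (⋂ t ∈ I, E t)
        = (fun ω (p : {p // p ∈ T}) => Z p ω) ⁻¹' (⋂ t ∈ I, goodSet T t) := by
      rw [Set.preimage_iInter₂]
      refine Set.iInter₂_congr fun t ht => ?_
      exact (hpre T t
        (fun i => Finset.mem_biUnion.mpr ⟨t, ht, mem_SS_left t i⟩)
        (fun i => Finset.mem_biUnion.mpr ⟨t, ht, mem_SS_right t i⟩)).symm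
    rw [Finset.set_biInter_insert, Finset.prod_insert ht0, h1, h2]
    rw [hIndep.measure_inter_preimage_eq_mul _ _ (measurableSet_goodSet _ _)
      (MeasurableSet.iInter fun t => MeasurableSet.iInter fun _ => measurableSet_goodSet _ _)]
    rw [← h1, ← h2, ih hIeven']
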